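/- arXiv:2508.00012 — 2 statements merged into one kernel-verified Lean document; each statement's English description precedes it below -/
import Mathlib

section
/- For $p \in (0,1)$, the number $r_{0,p} = (1 + 1/p + p) - (\sqrt{p} + 1/\sqrt{p})\sqrt{p + 1/p}$ is a root of the quadratic equation $p r^2 - 2(1+p+p^2) r + p = 0$, and moreover $r_{0,p} \in (0,p)$. -/
theorem stmt1 (p : ℝ) (hp : p ∈ Set.Ioo (0:ℝ) 1)
    (r : ℝ)
    (hr : r = (1 + 1 / p + p) - (Real.sqrt p + 1 / Real.sqrt p) * Real.sqrt (p + 1 / p)) :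
    p * r ^ 2 - 2 * (1 + p + p ^ 2) * r + p = 0 ∧ r ∈ Set.Ioo 0 p := by
  obtain ⟨hp0, hp1⟩ := hp
  set u := Real.sqrt p with hu
  set v := Real.sqrt (p + 1 / p) with hv
  have hu0 : 0 < u := Real.sqrt_pos.mpr hp0
  have hv0 : 0 < v := Real.sqrt_pos.mpr (by positivity)
  have hu2 : u ^ 2 = p := Real.sq_sqrt hp0.le
  have hv2 : v ^ 2 = p + 1 / p := Real.sq_sqrt (by positivity)
  set B := (u + 1 / u) * v with hB
  have hBpos : 0 < B := by positivity
  have hB2 : B ^ 2 = (1 + 1 / p + p) ^ 2 - 1 := by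
    have hpne : p ≠ 0 := hp0.ne'
    have hune : u ≠ 0 := hu0.ne'
    have huu : u * (1 / u) = 1 := mul_one_div_cancel hune
    have hiu : (1 / u) ^ 2 = 1 / p := by
      rw [div_pow, one_pow, hu2]
    have hstep : B ^ 2 = (u ^ 2 + 2 * (u * (1 / u)) + (1 / u) ^ 2) * v ^ 2 := by
      rw [hB]; ring
    rw [hstep, huu, hu2, hiu, hv2]
    field_simp
    ring
  set A := (1 + 1 / p + p) with hA
  have hApos : 0 < A := by positivity
  have hr' : r = A - B := hr
  have hBA : B < A := by nlinarith
  refine ⟨?_, ?_, ?_⟩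
  · have : 1 + p + p ^ 2 = p * A := by rw [hA, mul_add, mul_add, mul_one_div_cancel hp0.ne']; ring
    rw [hr', this]
    nlinarith
  · nlinarith
  · -- r < p : (A - p)^2 < B^2 and A - p > 0
    have h1 : 0 < A - p := by
      have : A - p = 1 + 1 / p := by ring
      rw [this]; positivity
    have hAp : A * p = p + 1 + p ^ 2 := by
      rw [hA]; field_simp
    have h2 : (A - p) ^ 2 < B ^ 2 := by
      rw [hB2]
      nlinarith [hAp, sq_nonneg (p + 1), hp0]
    nlinarith
end

section
/- Let $K \ge 1$, $k=(K-1)/(K+1)$, and $\alpha \in [0,1)$. Let $R^*_{k,\alpha} \in (0,1)$ be the unique root of $\frac{2K}{K+1}\cdot\frac{r}{(1-r)^{2(1-\alpha)}} = \frac{1}{2^{2(1-\alpha)}}$. Then $R^*_{k,\alpha} \le 1/3$ if and only if $\alpha \le \frac{1}{2}\log_3(3+3k)$. -/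
open Real

lemma mono_aux13 {β a b : ℝ} (hβ : 0 < β) (ha : 0 < a) (hab : a < b) (hb : b < 1) :
    a / (1 - a) ^ β < b / (1 - b) ^ β := by
  have h1 : (0:ℝ) < 1 - b := by linarith
  have h1' : (0:ℝ) < 1 - a := by linarith
  have h2 : (1 - b) ^ β < (1 - a) ^ β :=
    Real.rpow_lt_rpow h1.le (by linarith) hβ
  have h3 : (0:ℝ) < (1 - b) ^ β := Real.rpow_pos_of_pos h1 β
  have h4 : (0:ℝ) < (1 - a) ^ β := Real.rpow_pos_of_pos h1' β
  rw [div_lt_div_iff₀ h4 h3]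
  nlinarith

theorem stmt13 (K k α R : ℝ) (hK : 1 ≤ K) (hk : k = (K - 1) / (K + 1))
    (hα : α ∈ Set.Ico (0:ℝ) 1) (hR : R ∈ Set.Ioo (0:ℝ) 1)
    (heq : (2 * K / (K + 1)) * (R / (1 - R) ^ (2 * (1 - α))) = 1 / (2:ℝ) ^ (2 * (1 - α)))
    (huniq : ∀ r ∈ Set.Ioo (0:ℝ) 1,
      (2 * K / (K + 1)) * (r / (1 - r) ^ (2 * (1 - α))) = 1 / (2:ℝ) ^ (2 * (1 - α)) → r = R) :
    R ≤ 1 / 3 ↔ α ≤ (1 / 2) * Real.logb 3 (3 + 3 * k) := by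
  obtain ⟨hα0, hα1⟩ := hα
  obtain ⟨hR0, hR1⟩ := hR
  set β := 2 * (1 - α) with hβdef
  have hβ : 0 < β := by rw [hβdef]; linarith
  have hK1 : (0:ℝ) < K + 1 := by linarith
  have hC : 0 < 2 * K / (K + 1) := div_pos (by linarith) hK1
  have key : (3:ℝ) + 3 * k = 6 * K / (K + 1) := by
    rw [hk]; field_simp; ring
  have h6 : (0:ℝ) < 6 * K / (K + 1) := div_pos (by linarith) hK1
  -- positivity of rpow terms
  have h2pos : (0:ℝ) < (2:ℝ) ^ β := Real.rpow_pos_of_pos two_pos β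
  have h3pos : (0:ℝ) < (3:ℝ) ^ β := Real.rpow_pos_of_pos (by norm_num) β
  set s := (3:ℝ) ^ (2 * α) with hsdef
  have hspos : (0:ℝ) < s := Real.rpow_pos_of_pos (by norm_num) _
  have h3β : (3:ℝ) ^ β * s = 9 := by
    rw [hsdef, ← Real.rpow_add (by norm_num : (0:ℝ) < 3)]
    have : β + 2 * α = 2 := by rw [hβdef]; ring
    rw [this]
    rw [show ((2:ℝ)) = ((2:ℕ):ℝ) by norm_num, Real.rpow_natCast]
    norm_num
  -- Step 1: reduce to comparison at r = 1/3 via strict monotonicity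
  have step1 : R ≤ 1 / 3 ↔ (1:ℝ) / 2 ^ β ≤ (2 * K / (K + 1)) * ((1/3) / ((2:ℝ)/3) ^ β) := by
    have hrw : (1:ℝ) - 1/3 = 2/3 := by norm_num
    constructor
    · intro h
      rcases eq_or_lt_of_le h with he | hlt
      · rw [← heq, he, hrw]
      · have hm := mono_aux13 hβ hR0 hlt (by norm_num : (1:ℝ)/3 < 1)
        rw [hrw] at hm
        have := mul_lt_mul_of_pos_left hm hC
        rw [heq] at this
        exact this.le
    · intro h
      by_contra hc
      push_neg at hc
      have hm := mono_aux13 hβ (by norm_num : (0:ℝ) < 1/3) hc hR1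
      rw [hrw] at hm
      have := mul_lt_mul_of_pos_left hm hC
      rw [heq] at this
      linarith
  rw [step1]
  -- Step 2: simplify to 3^(2α) ≤ 6K/(K+1)
  have h23 : ((2:ℝ)/3) ^ β = 2 ^ β / 3 ^ β :=
    Real.div_rpow (by norm_num) (by norm_num) β
  have e1 : (2 * K / (K + 1)) * ((1/3) / ((2:ℝ)/3) ^ β) =
      (2 * K * (3:ℝ) ^ β) / (3 * (K + 1) * 2 ^ β) := by
    rw [h23]; field_simp
  have step2 : ((1:ℝ) / 2 ^ β ≤ (2 * K / (K + 1)) * ((1/3) / ((2:ℝ)/3) ^ β)) ↔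
      s ≤ 6 * K / (K + 1) := by
    rw [e1, div_le_div_iff₀ h2pos (by positivity), le_div_iff₀ hK1]
    constructor
    · intro h
      have h' : 3 * (K + 1) ≤ 2 * K * 3 ^ β := by nlinarith
      nlinarith
    · intro h
      have h' : 3 * (K + 1) ≤ 2 * K * 3 ^ β := by nlinarith
      nlinarith
  rw [step2, key]
  rw [show (1:ℝ)/2 * Real.logb 3 (6 * K / (K + 1)) = (Real.logb 3 (6 * K / (K + 1))) / 2 by ring]
  rw [le_div_iff₀ (by norm_num : (0:ℝ) < 2), show α * 2 = 2 * α by ring]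
  rw [Real.le_logb_iff_rpow_le (by norm_num : (1:ℝ) < 3) h6]
end
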